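/- arXiv:0906.0741 — 3 statements merged into one kernel-verified Lean document; each statement's English description precedes it below -/
import Mathlib

section
/- For every nonnegative integer p there exists a constant C_p > 0 such that for every entire function f : ℂ → ℂ with ∫_ℂ |f(z)|² e^{-|z|²} dz < ∞, one has for all z ∈ ℂ: |f^{(p)}(z)|² e^{-|z|²} ≤ C_p (1 + |z|^{2p}) ∫_ℂ |f(w)|² e^{-|w|²} dw. -/
open MeasureTheory Set
open scoped NNReal ENNReal


/-- Mean value property for entire functions on circles. -/
lemma circle_mean_value {g : ℂ → ℂ} (hg : Differentiable ℂ g) (c : ℂ) {r : ℝ} (hr : 0 < r) :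
    (∫ θ in (0)..(2 * Real.pi), g (circleMap c r θ)) = (2 * Real.pi : ℝ) • g c := by
  have h := Complex.circleIntegral_sub_center_inv_smul_of_differentiable_on_off_countable (c := c) hr
    Set.countable_empty hg.continuous.continuousOn (fun x _ => hg x)
  rw [circleIntegral] at h
  have e1 : ∀ θ : ℝ, deriv (circleMap c r) θ • (circleMap c r θ - c)⁻¹ • g (circleMap c r θ)
      = Complex.I • g (circleMap c r θ) := by
    intro θ
    have h0 : circleMap 0 r θ ≠ 0 := circleMap_ne_center hr.ne'
    rw [deriv_circleMap, circleMap_sub_center, smul_eq_mul, smul_eq_mul, smul_eq_mul]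
    field_simp
  simp only [e1] at h
  rw [intervalIntegral.integral_smul] at h
  have h2 : (2 * (Real.pi : ℂ) * Complex.I) • g c
      = Complex.I • ((2 * Real.pi : ℝ) • g c) := by
    simp only [smul_eq_mul, Complex.real_smul]
    push_cast
    ring
  rw [h2] at h
  exact smul_right_injective ℂ Complex.I_ne_zero h

/-- Sub-mean value property for squared norms of entire functions on circles. -/
lemma sq_mean_le {g : ℂ → ℂ} (hg : Differentiable ℂ g) (c : ℂ) {r : ℝ} (hr : 0 < r) :
    ‖g c‖ ^ 2 * (2 * Real.pi) ≤ ∫ θ in (0)..(2 * Real.pi), ‖g (circleMap c r θ)‖ ^ 2 := by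
  have h := circle_mean_value (g := fun u => g u * g u) (hg.mul hg) c hr
  have h1 : ‖g c‖ ^ 2 * (2 * Real.pi)
      = ‖∫ θ in (0)..(2 * Real.pi), g (circleMap c r θ) * g (circleMap c r θ)‖ := by
    rw [h, norm_smul, Real.norm_eq_abs, abs_of_pos Real.two_pi_pos, norm_mul]
    ring_nf
  rw [h1]
  have h2 := intervalIntegral.norm_integral_le_integral_norm
    (f := fun θ => g (circleMap c r θ) * g (circleMap c r θ)) (a := 0) (b := 2 * Real.pi) (μ := volume)
    Real.two_pi_pos.le
  refine h2.trans (le_of_eq ?_)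
  refine intervalIntegral.integral_congr fun θ _ => ?_
  rw [norm_mul, sq]

lemma lintegral_polar_real (H : ℝ × ℝ → ℝ≥0∞) :
    ∫⁻ p in polarCoord.target, ENNReal.ofReal p.1 * H (polarCoord.symm p) = ∫⁻ p, H p := by
  set B : ℝ × ℝ → ℝ × ℝ →L[ℝ] ℝ × ℝ := fun p =>
    LinearMap.toContinuousLinearMap (Matrix.toLin (Module.Basis.finTwoProd ℝ) (Module.Basis.finTwoProd ℝ)
      !![Real.cos p.2, -p.1 * Real.sin p.2; Real.sin p.2, p.1 * Real.cos p.2])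
  have A : ∀ p ∈ polarCoord.target, HasFDerivWithinAt polarCoord.symm (B p) polarCoord.target p :=
    fun p _ => (hasFDerivAt_polarCoord_symm p).hasFDerivWithinAt
  have B_det : ∀ p, (B p).det = p.1 := by
    intro p
    conv_rhs => rw [← one_mul p.1, ← Real.cos_sq_add_sin_sq p.2]
    simp only [B, neg_mul, LinearMap.det_toContinuousLinearMap, LinearMap.det_toLin,
      Matrix.det_fin_two_of, sub_neg_eq_add]
    ring
  have hinj : Set.InjOn polarCoord.symm polarCoord.target := polarCoord.symm.injOn
  have key := lintegral_image_eq_lintegral_abs_det_fderiv_mul volume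
    polarCoord.open_target.measurableSet A hinj H
  rw [polarCoord.symm_image_target_eq_source] at key
  have h1 : ∫⁻ p in polarCoord.source, H p = ∫⁻ p, H p := by
    rw [setLIntegral_congr polarCoord_source_ae_eq_univ, setLIntegral_univ]
  rw [h1] at key
  rw [key]
  refine lintegral_congr_ae ((ae_restrict_iff' polarCoord.open_target.measurableSet).2
    (Filter.Eventually.of_forall fun p hp => ?_))
  simp only []
  rw [B_det, abs_of_pos hp.1]

lemma lintegral_polar (G : ℂ → ℝ≥0∞) (hG : Measurable G) :
    ∫⁻ p in polarCoord.target, ENNReal.ofReal p.1 * G (Complex.polarCoord.symm p) = ∫⁻ u, G u := by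
  rw [← (Complex.volume_preserving_equiv_real_prod.symm _).lintegral_comp hG,
    ← lintegral_polar_real]
  rfl

lemma kernel_bound {f : ℂ → ℂ} (hf : Differentiable ℂ f)
    (hint : Integrable (fun z : ℂ => ‖f z‖ ^ 2 * Real.exp (-‖z‖ ^ 2))) (w : ℂ) :
    ‖f w‖ ^ 2 * Real.exp (-‖w‖ ^ 2) ≤
      (Real.exp 1 / Real.pi) * ∫ u : ℂ, ‖f u‖ ^ 2 * Real.exp (-‖u‖ ^ 2) := by
  set g : ℂ → ℝ := fun u => ‖f u‖ ^ 2 * Real.exp (-‖u‖ ^ 2) with hg_def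
  have hg_cont : Continuous g := by
    apply Continuous.mul
    · exact (hf.continuous.norm).pow 2
    · exact Real.continuous_exp.comp ((continuous_norm.pow 2).neg)
  have hg_nonneg : ∀ u, 0 ≤ g u := fun u =>
    mul_nonneg (pow_nonneg (norm_nonneg _) 2) (Real.exp_pos _).le
  set I := ∫ u : ℂ, g u with hI_def
  have hI_nonneg : 0 ≤ I := integral_nonneg hg_nonneg
  -- auxiliary entire function
  set F : ℂ → ℂ :=
    fun u => Complex.exp (((‖w‖ ^ 2 / 2 : ℝ) : ℂ) - (starRingEnd ℂ) w * u) * f u with hF_def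
  have hF : Differentiable ℂ F :=
    (((differentiable_const _).sub (differentiable_id.const_mul _)).cexp).mul hf
  have hsq : ∀ z : ℂ, ‖z‖ ^ 2 = z.re ^ 2 + z.im ^ 2 := fun z => by
    rw [Complex.sq_norm, Complex.normSq_apply]; ring
  have normF : ∀ u, ‖F u‖ ^ 2 = ‖f u‖ ^ 2 * Real.exp (‖u - w‖ ^ 2 - ‖u‖ ^ 2) := by
    intro u
    rw [hF_def]
    simp only
    rw [norm_mul, mul_pow, Complex.norm_exp, mul_comm]
    congr 1
    have h2 : Real.exp ((((‖w‖ ^ 2 / 2 : ℝ) : ℂ) - (starRingEnd ℂ) w * u).re) ^ 2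
        = Real.exp (2 * ((((‖w‖ ^ 2 / 2 : ℝ) : ℂ) - (starRingEnd ℂ) w * u).re)) := by
      rw [← Real.exp_nat_mul]; norm_num
    rw [h2]
    congr 1
    rw [hsq (u - w), hsq u, hsq w]
    simp only [Complex.sub_re, Complex.sub_im, Complex.ofReal_re, Complex.mul_re,
      Complex.conj_re, Complex.conj_im]
    ring
  -- circle estimate for each radius r ∈ (0,1)
  have step : ∀ r : ℝ, r ∈ Ioo (0 : ℝ) 1 →
      g w * (2 * Real.pi) ≤ Real.exp 1 * ∫ θ in (-Real.pi)..Real.pi, g (circleMap w r θ) := by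
    intro r hr
    have h1 := sq_mean_le hF w hr.1
    have hFw : ‖F w‖ ^ 2 = g w := by
      rw [normF w, hg_def]
      simp
    have hbound : ∀ θ : ℝ, ‖F (circleMap w r θ)‖ ^ 2 ≤ Real.exp 1 * g (circleMap w r θ) := by
      intro θ
      rw [normF]
      have hd : ‖circleMap w r θ - w‖ = r := by
        rw [circleMap_sub_center, norm_circleMap_zero, abs_of_pos hr.1]
      rw [hd, hg_def]
      simp only
      have hexp : Real.exp (r ^ 2 - ‖circleMap w r θ‖ ^ 2)
          ≤ Real.exp 1 * Real.exp (-‖circleMap w r θ‖ ^ 2) := by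
        rw [← Real.exp_add]
        apply Real.exp_le_exp.2
        nlinarith [hr.1.le, hr.2]
      calc ‖f (circleMap w r θ)‖ ^ 2 * Real.exp (r ^ 2 - ‖circleMap w r θ‖ ^ 2)
          ≤ ‖f (circleMap w r θ)‖ ^ 2 * (Real.exp 1 * Real.exp (-‖circleMap w r θ‖ ^ 2)) :=
            mul_le_mul_of_nonneg_left hexp (pow_nonneg (norm_nonneg _) 2)
        _ = Real.exp 1 * (‖f (circleMap w r θ)‖ ^ 2 * Real.exp (-‖circleMap w r θ‖ ^ 2)) := by
            ring
    have hFi : IntervalIntegrable (fun θ => ‖F (circleMap w r θ)‖ ^ 2) volume 0 (2 * Real.pi) :=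
      ((hF.continuous.comp (continuous_circleMap _ _)).norm.pow 2).intervalIntegrable _ _
    have hgi : IntervalIntegrable (fun θ => Real.exp 1 * g (circleMap w r θ)) volume
        0 (2 * Real.pi) :=
      (continuous_const.mul (hg_cont.comp (continuous_circleMap _ _))).intervalIntegrable _ _
    have h2 : (∫ θ in (0)..(2 * Real.pi), ‖F (circleMap w r θ)‖ ^ 2)
        ≤ ∫ θ in (0)..(2 * Real.pi), Real.exp 1 * g (circleMap w r θ) :=
      intervalIntegral.integral_mono_on Real.two_pi_pos.le hFi hgi fun θ _ => hbound θ
    have h3 : (∫ θ in (0)..(2 * Real.pi), Real.exp 1 * g (circleMap w r θ))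
        = Real.exp 1 * ∫ θ in (0)..(2 * Real.pi), g (circleMap w r θ) :=
      intervalIntegral.integral_const_mul _ _
    have hper : (∫ θ in (0)..(2 * Real.pi), g (circleMap w r θ))
        = ∫ θ in (-Real.pi)..Real.pi, g (circleMap w r θ) := by
      have hp : Function.Periodic (fun θ => g (circleMap w r θ)) (2 * Real.pi) :=
        (periodic_circleMap w r).comp g
      have h4 := hp.intervalIntegral_add_eq 0 (-Real.pi)
      rw [zero_add] at h4
      have h5 : -Real.pi + 2 * Real.pi = Real.pi := by ring
      rw [h5] at h4
      exact h4
    rw [hFw] at h1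
    rw [hper] at h3
    linarith [h1.trans (h2.trans_eq h3)]
  -- pass to Lebesgue integrals in polar coordinates
  set G : ℂ → ℝ≥0∞ := fun u => ENNReal.ofReal (g u) with hG_def
  have hGm : Measurable G := ENNReal.measurable_ofReal.comp hg_cont.measurable
  have hsymm_cont : Continuous fun p : ℝ × ℝ => Complex.polarCoord.symm p := by
    simp only [Complex.polarCoord_symm_apply]
    fun_prop
  have htar : polarCoord.target = Set.Ioi (0 : ℝ) ×ˢ Set.Ioo (-Real.pi) Real.pi := rfl
  have up : (∫⁻ p in Ioo (0 : ℝ) 1 ×ˢ Ioo (-Real.pi) Real.pi,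
      ENNReal.ofReal p.1 * G (w + Complex.polarCoord.symm p)) ≤ ENNReal.ofReal I := by
    have hsub : Ioo (0 : ℝ) 1 ×ˢ Ioo (-Real.pi) Real.pi ⊆ polarCoord.target := by
      rw [htar]
      exact Set.prod_mono Ioo_subset_Ioi_self subset_rfl
    refine le_trans (lintegral_mono_set hsub) ?_
    have e1 : (∫⁻ p in polarCoord.target,
        ENNReal.ofReal p.1 * G (w + Complex.polarCoord.symm p)) = ∫⁻ u, G (w + u) :=
      lintegral_polar (fun u => G (w + u)) (hGm.comp (measurable_const.add measurable_id))
    have e2 : (∫⁻ u, G (w + u)) = ∫⁻ u, G u :=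
      (measurePreserving_add_left volume w).lintegral_comp hGm
    rw [e1, e2, hG_def]
    rw [ofReal_integral_eq_lintegral_ofReal hint (Filter.Eventually.of_forall hg_nonneg)]
  have half : (∫⁻ r in Ioo (0 : ℝ) 1, ENNReal.ofReal r) = ENNReal.ofReal 2⁻¹ := by
    have hi : IntegrableOn (fun r : ℝ => r) (Ioo (0 : ℝ) 1) :=
      (continuous_id.intervalIntegrable 0 1).1.mono_set Ioo_subset_Ioc_self
    rw [← ofReal_integral_eq_lintegral_ofReal hi
      ((ae_restrict_iff' measurableSet_Ioo).2 (Filter.Eventually.of_forall fun r hr => hr.1.le))]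
    congr 1
    rw [← integral_Ioc_eq_integral_Ioo, ← intervalIntegral.integral_of_le zero_le_one,
      integral_id]
    norm_num
  have low : ENNReal.ofReal (g w * (2 * Real.pi) / Real.exp 1) * ENNReal.ofReal 2⁻¹
      ≤ ∫⁻ p in Ioo (0 : ℝ) 1 ×ˢ Ioo (-Real.pi) Real.pi,
        ENNReal.ofReal p.1 * G (w + Complex.polarCoord.symm p) := by
    have hmeas : Measurable fun p : ℝ × ℝ =>
        ENNReal.ofReal p.1 * G (w + Complex.polarCoord.symm p) :=
      measurable_fst.ennreal_ofReal.mul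
        (hGm.comp (measurable_const.add hsymm_cont.measurable))
    rw [Measure.volume_eq_prod, ← Measure.prod_restrict, lintegral_prod _ hmeas.aemeasurable]
    have symm_eq : ∀ r θ : ℝ, w + Complex.polarCoord.symm (r, θ) = circleMap w r θ := by
      intro r θ
      rw [Complex.polarCoord_symm_apply]
      simp only [circleMap, Complex.exp_mul_I, ← Complex.ofReal_cos, ← Complex.ofReal_sin]
      try ring
    have inner : ∀ r ∈ Ioo (0 : ℝ) 1,
        ENNReal.ofReal (g w * (2 * Real.pi) / Real.exp 1) * ENNReal.ofReal r
        ≤ ∫⁻ θ in Ioo (-Real.pi) Real.pi,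
            ENNReal.ofReal (r, θ).1 * G (w + Complex.polarCoord.symm ((r : ℝ), θ)) := by
      intro r hr
      have e3 : (∫⁻ θ in Ioo (-Real.pi) Real.pi,
          ENNReal.ofReal (r, θ).1 * G (w + Complex.polarCoord.symm ((r : ℝ), θ)))
          = ∫⁻ θ in Ioo (-Real.pi) Real.pi, ENNReal.ofReal (r * g (circleMap w r θ)) := by
        refine lintegral_congr fun θ => ?_
        rw [symm_eq r θ, hG_def]
        simp only
        rw [ENNReal.ofReal_mul hr.1.le]
      have hgi2 : IntegrableOn (fun θ : ℝ => r * g (circleMap w r θ))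
          (Ioo (-Real.pi) Real.pi) := by
        refine IntegrableOn.mono_set ?_ Ioo_subset_Icc_self
        exact ((continuous_const.mul
          (hg_cont.comp (continuous_circleMap _ _))).continuousOn).integrableOn_compact
          isCompact_Icc
      have e4 : (∫⁻ θ in Ioo (-Real.pi) Real.pi, ENNReal.ofReal (r * g (circleMap w r θ)))
          = ENNReal.ofReal (∫ θ in Ioo (-Real.pi) Real.pi, r * g (circleMap w r θ)) :=
        (ofReal_integral_eq_lintegral_ofReal hgi2
          ((ae_restrict_iff' measurableSet_Ioo).2 (Filter.Eventually.of_forall fun θ _ =>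
            mul_nonneg hr.1.le (hg_nonneg _)))).symm
      rw [e3, e4]
      have e5 : (∫ θ in Ioo (-Real.pi) Real.pi, r * g (circleMap w r θ))
          = r * ∫ θ in (-Real.pi)..Real.pi, g (circleMap w r θ) := by
        rw [intervalIntegral.integral_of_le (by linarith [Real.pi_pos]),
          ← integral_Ioc_eq_integral_Ioo, MeasureTheory.integral_const_mul]
      rw [e5, ← ENNReal.ofReal_mul (by positivity)]
      apply ENNReal.ofReal_le_ofReal
      have hs := step r hr
      have hepos := Real.exp_pos 1
      rw [div_mul_eq_mul_div, div_le_iff₀ hepos]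
      calc g w * (2 * Real.pi) * r ≤ (Real.exp 1 * ∫ θ in (-Real.pi)..Real.pi,
            g (circleMap w r θ)) * r := mul_le_mul_of_nonneg_right hs hr.1.le
        _ = r * (∫ θ in (-Real.pi)..Real.pi, g (circleMap w r θ)) * Real.exp 1 := by ring
    calc ENNReal.ofReal (g w * (2 * Real.pi) / Real.exp 1) * ENNReal.ofReal 2⁻¹
        = ∫⁻ r in Ioo (0 : ℝ) 1,
            ENNReal.ofReal (g w * (2 * Real.pi) / Real.exp 1) * ENNReal.ofReal r := by
          rw [lintegral_const_mul' _ _ ENNReal.ofReal_ne_top, half]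
      _ ≤ _ := lintegral_mono_ae ((ae_restrict_iff' measurableSet_Ioo).2
          (Filter.Eventually.of_forall fun r hr => inner r hr))
  have key : ENNReal.ofReal (g w * (2 * Real.pi) / Real.exp 1 * 2⁻¹) ≤ ENNReal.ofReal I := by
    rw [ENNReal.ofReal_mul (by positivity)]
    exact low.trans up
  have hreal : g w * (2 * Real.pi) / Real.exp 1 * 2⁻¹ ≤ I :=
    (ENNReal.ofReal_le_ofReal_iff hI_nonneg).1 key
  have hπ := Real.pi_pos
  have he := Real.exp_pos 1
  have heq : g w * (2 * Real.pi) / Real.exp 1 * 2⁻¹ * (Real.exp 1 / Real.pi) = g w := by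
    field_simp
  have := mul_le_mul_of_nonneg_right hreal (le_of_lt (div_pos he hπ))
  rw [heq] at this
  calc g w ≤ I * (Real.exp 1 / Real.pi) := this
    _ = Real.exp 1 / Real.pi * I := by ring

lemma poly_bound (p : ℕ) {t : ℝ} (ht : 0 ≤ t) :
    (1 + t) ^ (2 * p) ≤ 4 ^ p * (1 + t ^ (2 * p)) := by
  have h1 : (1 + t) ^ 2 ≤ 2 * (1 + t ^ 2) := by nlinarith [sq_nonneg (1 - t)]
  have h2 : (1 + t) ^ (2 * p) ≤ 2 ^ p * (1 + t ^ 2) ^ p := by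
    rw [pow_mul, ← mul_pow]
    exact pow_le_pow_left₀ (by positivity) h1 p
  have h3 : (1 + t ^ 2) ^ p ≤ 2 ^ p * (1 + t ^ (2 * p)) := by
    rw [pow_mul]
    rcases le_total (t ^ 2) 1 with h | h
    · have : (1 + t ^ 2) ^ p ≤ 2 ^ p := pow_le_pow_left₀ (by positivity) (by linarith) p
      nlinarith [pow_nonneg (by positivity : (0:ℝ) ≤ (2:ℝ)) p,
        pow_nonneg (sq_nonneg t) p]
    · have : (1 + t ^ 2) ^ p ≤ (2 * t ^ 2) ^ p := pow_le_pow_left₀ (by positivity) (by linarith) p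
      rw [mul_pow] at this
      nlinarith [pow_nonneg (by positivity : (0:ℝ) ≤ (2:ℝ)) p,
        pow_nonneg (sq_nonneg t) p]
  calc (1 + t) ^ (2 * p) ≤ 2 ^ p * (1 + t ^ 2) ^ p := h2
    _ ≤ 2 ^ p * (2 ^ p * (1 + t ^ (2 * p))) :=
        mul_le_mul_of_nonneg_left h3 (by positivity)
    _ = 4 ^ p * (1 + t ^ (2 * p)) := by
        rw [← mul_assoc, ← mul_pow]; norm_num

/-- Carlen's inequality: for every `p` there is a constant `C_p > 0` such that every
entire function `f` in the Bargmann space satisfies the pointwise bound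
`|f^{(p)}(z)|² e^{-|z|²} ≤ C_p (1 + |z|^{2p}) ‖f‖²`. -/
theorem carlen_inequality (p : ℕ) :
    ∃ C : ℝ, 0 < C ∧ ∀ f : ℂ → ℂ, Differentiable ℂ f →
      Integrable (fun z : ℂ => ‖f z‖ ^ 2 * Real.exp (-‖z‖ ^ 2)) →
      ∀ z : ℂ,
        ‖iteratedDeriv p f z‖ ^ 2 * Real.exp (-‖z‖ ^ 2) ≤
          C * (1 + ‖z‖ ^ (2 * p)) * ∫ w : ℂ, ‖f w‖ ^ 2 * Real.exp (-‖w‖ ^ 2) := by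
  have hfactpos : (0 : ℝ) < (p.factorial : ℝ) := by exact_mod_cast p.factorial_pos
  refine ⟨(p.factorial : ℝ) ^ 2 * (Real.exp 1 * Real.exp 3 / Real.pi) * 4 ^ p, by positivity,
    fun f hf hint z => ?_⟩
  set I := ∫ w : ℂ, ‖f w‖ ^ 2 * Real.exp (-‖w‖ ^ 2) with hI_def
  have hI_nonneg : 0 ≤ I :=
    integral_nonneg fun u => mul_nonneg (by positivity) (Real.exp_pos _).le
  set R : ℝ≥0 := ((1 + ‖z‖)⁻¹).toNNReal with hR_def
  have hR'' : (0:ℝ) < (1 + ‖z‖)⁻¹ := by positivity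
  have hR : 0 < R := Real.toNNReal_pos.2 hR''
  have hRcoe : (R : ℝ) = (1 + ‖z‖)⁻¹ := Real.coe_toNNReal _ hR''.le
  have hR1 : (R : ℝ) ≤ 1 := by
    rw [hRcoe]
    rw [inv_le_one_iff₀]
    right; linarith [norm_nonneg z]
  have hRz : (R : ℝ) * ‖z‖ ≤ 1 := by
    rw [hRcoe]
    rw [inv_mul_le_iff₀ (by positivity)]
    nlinarith [norm_nonneg z]
  -- the sup bound on the circle of radius R
  set E : ℝ := Real.exp 1 / Real.pi * I * Real.exp (‖z‖ ^ 2 + 3) with hE_def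
  have hE_nonneg : 0 ≤ E := by
    apply mul_nonneg (mul_nonneg (by positivity) hI_nonneg) (Real.exp_pos _).le
  set M : ℝ := Real.sqrt E with hM_def
  have hM_nonneg : 0 ≤ M := Real.sqrt_nonneg _
  have hM : ∀ θ : ℝ, ‖f (circleMap z (R : ℝ) θ)‖ ≤ M := by
    intro θ
    set u := circleMap z (R : ℝ) θ with hu_def
    have hub : ‖u‖ ≤ ‖z‖ + (R : ℝ) := by
      rw [hu_def, circleMap]
      calc ‖z + (R : ℝ) * Complex.exp (θ * Complex.I)‖
          ≤ ‖z‖ + ‖((R : ℝ) : ℂ) * Complex.exp (θ * Complex.I)‖ := norm_add_le _ _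
        _ = ‖z‖ + (R : ℝ) := by
            simp [Complex.norm_exp_ofReal_mul_I, Complex.norm_real,
              abs_of_nonneg R.coe_nonneg]
    have husq : ‖u‖ ^ 2 ≤ ‖z‖ ^ 2 + 3 := by
      nlinarith [norm_nonneg u, norm_nonneg z, R.coe_nonneg]
    have hk := kernel_bound hf hint u
    rw [← hI_def] at hk
    have hfu : ‖f u‖ ^ 2 ≤ E := by
      have h5 : ‖f u‖ ^ 2 = ‖f u‖ ^ 2 * Real.exp (-‖u‖ ^ 2) * Real.exp (‖u‖ ^ 2) := by
        rw [mul_assoc, ← Real.exp_add]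
        simp
      rw [h5, hE_def]
      calc ‖f u‖ ^ 2 * Real.exp (-‖u‖ ^ 2) * Real.exp (‖u‖ ^ 2)
          ≤ Real.exp 1 / Real.pi * I * Real.exp (‖u‖ ^ 2) :=
            mul_le_mul_of_nonneg_right hk (Real.exp_pos _).le
        _ ≤ Real.exp 1 / Real.pi * I * Real.exp (‖z‖ ^ 2 + 3) := by
            apply mul_le_mul_of_nonneg_left (Real.exp_le_exp.2 husq)
            exact mul_nonneg (by positivity) hI_nonneg
    calc ‖f u‖ = Real.sqrt (‖f u‖ ^ 2) := (Real.sqrt_sq (norm_nonneg _)).symm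
      _ ≤ M := Real.sqrt_le_sqrt hfu
  -- Cauchy estimate
  have hps := hf.hasFPowerSeriesOnBall z hR
  have hcoef := hps.factorial_smul (1 : ℂ) p
  have hit : iteratedDeriv p f z = iteratedFDeriv ℂ p f z fun _ => 1 :=
    iteratedDeriv_eq_iteratedFDeriv
  have hnorm1 : ‖iteratedDeriv p f z‖
      = (p.factorial : ℝ) * ‖cauchyPowerSeries f z R p fun _ => (1 : ℂ)‖ := by
    rw [hit, ← hcoef]
    rw [nsmul_eq_mul]
    rw [norm_mul, Complex.norm_natCast]
  have hopn : ‖cauchyPowerSeries f z R p fun _ => (1 : ℂ)‖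
      ≤ ‖cauchyPowerSeries f z R p‖ := by
    calc ‖cauchyPowerSeries f z R p fun _ => (1 : ℂ)‖
        ≤ ‖cauchyPowerSeries f z R p‖ * ∏ _i : Fin p, ‖(1 : ℂ)‖ :=
          (cauchyPowerSeries f z R p).le_opNorm _
      _ = ‖cauchyPowerSeries f z R p‖ := by simp
  have hcps := norm_cauchyPowerSeries_le f z (R : ℝ) p
  -- bound the circle integral of ‖f‖ by 2π M
  have hint_mono : (∫ θ in (0)..(2 * Real.pi), ‖f (circleMap z (R : ℝ) θ)‖)
      ≤ 2 * Real.pi * M := by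
    have h6 : (∫ θ in (0)..(2 * Real.pi), ‖f (circleMap z (R : ℝ) θ)‖)
        ≤ ∫ _θ in (0)..(2 * Real.pi), M := by
      apply intervalIntegral.integral_mono_on Real.two_pi_pos.le
      · exact ((hf.continuous.comp (continuous_circleMap _ _)).norm).intervalIntegrable _ _
      · exact intervalIntegrable_const
      · exact fun θ _ => hM θ
    simpa using h6
  have habs : |(R : ℝ)|⁻¹ = 1 + ‖z‖ := by
    rw [abs_of_pos (by rw [hRcoe]; positivity), hRcoe, inv_inv]
  have hD : ‖iteratedDeriv p f z‖ ≤ (p.factorial : ℝ) * (M * (1 + ‖z‖) ^ p) := by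
    rw [hnorm1]
    apply mul_le_mul_of_nonneg_left _ (le_of_lt hfactpos)
    calc ‖cauchyPowerSeries f z R p fun _ => (1 : ℂ)‖
        ≤ ‖cauchyPowerSeries f z R p‖ := hopn
      _ ≤ ((2 * Real.pi)⁻¹ * ∫ θ in (0)..(2 * Real.pi), ‖f (circleMap z (R : ℝ) θ)‖)
            * |(R : ℝ)|⁻¹ ^ p := hcps
      _ ≤ ((2 * Real.pi)⁻¹ * (2 * Real.pi * M)) * |(R : ℝ)|⁻¹ ^ p := by
          apply mul_le_mul_of_nonneg_right _ (by positivity)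
          exact mul_le_mul_of_nonneg_left hint_mono (by positivity)
      _ = M * (1 + ‖z‖) ^ p := by
          rw [habs]
          field_simp
  -- put everything together
  have hD2 : ‖iteratedDeriv p f z‖ ^ 2 ≤ (p.factorial : ℝ) ^ 2 * (E * (1 + ‖z‖) ^ (2 * p)) := by
    calc ‖iteratedDeriv p f z‖ ^ 2 ≤ ((p.factorial : ℝ) * (M * (1 + ‖z‖) ^ p)) ^ 2 :=
        pow_le_pow_left₀ (norm_nonneg _) hD 2
      _ = (p.factorial : ℝ) ^ 2 * (M ^ 2 * ((1 + ‖z‖) ^ p) ^ 2) := by ring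
      _ = (p.factorial : ℝ) ^ 2 * (E * (1 + ‖z‖) ^ (2 * p)) := by
          rw [hM_def, Real.sq_sqrt hE_nonneg, ← pow_mul, mul_comm p 2]
  have hexp3 : Real.exp (‖z‖ ^ 2 + 3) * Real.exp (-‖z‖ ^ 2) = Real.exp 3 := by
    rw [← Real.exp_add]; congr 1; ring
  calc ‖iteratedDeriv p f z‖ ^ 2 * Real.exp (-‖z‖ ^ 2)
      ≤ (p.factorial : ℝ) ^ 2 * (E * (1 + ‖z‖) ^ (2 * p)) * Real.exp (-‖z‖ ^ 2) :=
        mul_le_mul_of_nonneg_right hD2 (Real.exp_pos _).le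
    _ = (p.factorial : ℝ) ^ 2 * (Real.exp 1 * Real.exp 3 / Real.pi) * I * (1 + ‖z‖) ^ (2 * p) := by
        rw [hE_def]
        rw [show (p.factorial : ℝ) ^ 2 * (Real.exp 1 / Real.pi * I * Real.exp (‖z‖ ^ 2 + 3)
            * (1 + ‖z‖) ^ (2 * p)) * Real.exp (-‖z‖ ^ 2)
          = (p.factorial : ℝ) ^ 2 * (Real.exp 1 / Real.pi * I * (1 + ‖z‖) ^ (2 * p))
            * (Real.exp (‖z‖ ^ 2 + 3) * Real.exp (-‖z‖ ^ 2)) by ring, hexp3]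
        ring
    _ ≤ (p.factorial : ℝ) ^ 2 * (Real.exp 1 * Real.exp 3 / Real.pi) * I
          * (4 ^ p * (1 + ‖z‖ ^ (2 * p))) := by
        apply mul_le_mul_of_nonneg_left (poly_bound p (norm_nonneg z))
        exact mul_nonneg (by positivity) hI_nonneg
    _ = (p.factorial : ℝ) ^ 2 * (Real.exp 1 * Real.exp 3 / Real.pi) * 4 ^ p
          * (1 + ‖z‖ ^ (2 * p)) * I := by ring
end

section
/- Every function f in the Bargmann space B₁ satisfies the coherent state reproducing formula: for all z ∈ ℂ, f(z) = π^{-1} ∫_ℂ f(ξ) e^{\bar{ξ} z} e^{-|ξ|²} dξ. -/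
open MeasureTheory Complex Real

theorem polar_integrableOn {E : Type*} [NormedAddCommGroup E] [NormedSpace ℝ E]
    (f : ℝ × ℝ → E) (hf : Integrable f) :
    IntegrableOn (fun p : ℝ × ℝ => p.1 • f (polarCoord.symm p)) polarCoord.target := by
  set B : ℝ × ℝ → ℝ × ℝ →L[ℝ] ℝ × ℝ := fun p =>
    LinearMap.toContinuousLinearMap (Matrix.toLin (Module.Basis.finTwoProd ℝ) (Module.Basis.finTwoProd ℝ)
      !![Real.cos p.2, -p.1 * Real.sin p.2; Real.sin p.2, p.1 * Real.cos p.2])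
  have A : ∀ p ∈ polarCoord.target, HasFDerivWithinAt polarCoord.symm (B p) polarCoord.target p :=
    fun p _ => (hasFDerivAt_polarCoord_symm p).hasFDerivWithinAt
  have B_det : ∀ p, (B p).det = p.1 := by
    intro p
    conv_rhs => rw [← one_mul p.1, ← Real.cos_sq_add_sin_sq p.2]
    simp only [B, neg_mul, LinearMap.det_toContinuousLinearMap, LinearMap.det_toLin,
      Matrix.det_fin_two_of, sub_neg_eq_add]
    ring
  have hinj : Set.InjOn polarCoord.symm polarCoord.target := polarCoord.symm.injOn
  have h := (integrableOn_image_iff_integrableOn_abs_det_fderiv_smul volume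
      polarCoord.open_target.measurableSet A hinj f).mp ?_
  · refine (h.congr_fun ?_ polarCoord.open_target.measurableSet)
    intro p hp
    simp only []
    rw [B_det, abs_of_pos hp.1]
  · rw [show polarCoord.symm '' polarCoord.target = polarCoord.source from
      polarCoord.symm_image_target_eq_source]
    exact hf.integrableOn

theorem polar_integrableOn_complex {E : Type*} [NormedAddCommGroup E] [NormedSpace ℝ E]
    (f : ℂ → E) (hf : Integrable f) :
    IntegrableOn (fun p : ℝ × ℝ => p.1 • f (Complex.polarCoord.symm p)) polarCoord.target := by
  have h1 : Integrable (f ∘ Complex.measurableEquivRealProd.symm) := by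
    rw [MeasurePreserving.integrable_comp_emb
      (Complex.volume_preserving_equiv_real_prod.symm)
      Complex.measurableEquivRealProd.symm.measurableEmbedding]
    exact hf
  have := polar_integrableOn _ h1
  exact this

theorem circle_mean (g : ℂ → ℂ) (hg : Differentiable ℂ g) (c : ℂ) (r : ℝ) (hr : 0 < r) :
    ∫ θ in (0)..(2*π), g (circleMap c r θ) = 2 * π * g c := by
  have h := (hg.diffContOnCl (s := Metric.ball c r)).circleIntegral_sub_inv_smul
    (w := c) (by simpa using hr)
  rw [circleIntegral] at h
  simp only [deriv_circleMap, smul_eq_mul] at h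
  have heq : ∀ θ : ℝ, (circleMap 0 r θ * I) * ((circleMap c r θ - c)⁻¹ * g (circleMap c r θ))
      = I * g (circleMap c r θ) := by
    intro θ
    have hne : circleMap 0 r θ ≠ 0 := circleMap_ne_center hr.ne'
    field_simp [circleMap_sub_center]
    rw [circleMap_sub_center]
    exact mul_div_cancel_left₀ _ hne
  simp only [heq] at h
  rw [intervalIntegral.integral_const_mul] at h
  have h2 : I * ∫ θ in (0)..(2*π), g (circleMap c r θ) = I * (2 * π * g c) := by
    rw [h]; ring
  exact mul_left_cancel₀ I_ne_zero h2

theorem radial_gauss : ∫ r in Set.Ioi (0:ℝ), r * rexp (-r^2) = 1/2 := by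
  have h : ∀ r ∈ Set.Ici (0:ℝ), HasDerivAt (fun r : ℝ => -(1/2) * rexp (-r^2)) (r * rexp (-r^2)) r := by
    intro r _
    have h1 : HasDerivAt (fun r : ℝ => -r^2) (-(2*r)) r := by
      simpa using ((hasDerivAt_pow 2 r).fun_neg)
    have := (h1.exp).const_mul (-(1/2))
    convert this using 1
    · rfl
    · rfl
    · ring
  have := integral_Ioi_of_hasDerivAt_of_tendsto (f := fun r : ℝ => -(1/2) * rexp (-r^2))
    (Continuous.continuousWithinAt (by continuity)) (fun r hr => h r (Set.mem_Ici.mpr hr.le))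
    ?_ (m := 0) ?_
  · simpa using this
  · have : IntegrableOn (fun r : ℝ => r * rexp (-1 * r^2)) (Set.Ioi 0) :=
      (integrable_mul_exp_neg_mul_sq (b := 1) one_pos).integrableOn
    simpa using this
  · have h1 : Filter.Tendsto (fun r : ℝ => rexp (-r^2)) Filter.atTop (nhds 0) := by
      have h2 : Filter.Tendsto (fun r : ℝ => -r^2) Filter.atTop Filter.atBot := by
        simpa using (Filter.tendsto_pow_atTop (n := 2) (by norm_num)).neg
      exact Real.tendsto_exp_atBot.comp h2
    have h3 := h1.const_mul (-(1/2) : ℝ)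
    rw [mul_zero] at h3
    exact h3

theorem gaussian_mean (g : ℂ → ℂ) (hg : Differentiable ℂ g)
    (hi : Integrable (fun w : ℂ => g w * (rexp (-‖w‖^2) : ℂ))) :
    ∫ w : ℂ, g w * (rexp (-‖w‖^2) : ℂ) = π * g 0 := by
  rw [← Complex.integral_comp_polarCoord_symm (fun w : ℂ => g w * (rexp (-‖w‖^2) : ℂ))]
  have hsymm : ∀ p : ℝ × ℝ, Complex.polarCoord.symm p = circleMap 0 p.1 p.2 := by
    intro p
    rw [Complex.polarCoord_symm_apply]
    simp [circleMap, Complex.exp_mul_I]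
  have hnorm : ∀ p : ℝ × ℝ, ‖Complex.polarCoord.symm p‖^2 = p.1^2 := by
    intro p
    rw [Complex.norm_polarCoord_symm, _root_.sq_abs]
  have hfun : (fun p : ℝ × ℝ => p.1 • (g (Complex.polarCoord.symm p) *
        (rexp (-‖Complex.polarCoord.symm p‖^2) : ℂ)))
      = fun p : ℝ × ℝ => (p.1 : ℂ) * (g (circleMap 0 p.1 p.2) * (rexp (-p.1^2) : ℂ)) := by
    funext p
    rw [hnorm, hsymm, real_smul]
  have hIntOn := polar_integrableOn_complex _ hi
  rw [hfun] at hIntOn ⊢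
  rw [polarCoord_target, Measure.volume_eq_prod] at hIntOn ⊢
  rw [setIntegral_prod _ hIntOn]
  have houter : ∀ r ∈ Set.Ioi (0:ℝ),
      (∫ θ in Set.Ioo (-π) π, (r : ℂ) * (g (circleMap 0 r θ) * (rexp (-r^2) : ℂ)))
        = ((r * rexp (-r^2) : ℝ) : ℂ) * (2 * π * g 0) := by
    intro r hr
    rw [integral_const_mul]
    rw [show (fun θ => g (circleMap 0 r θ) * (rexp (-r^2) : ℂ))
        = fun θ => (rexp (-r^2) : ℂ) * g (circleMap 0 r θ) by funext θ; ring]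
    rw [integral_const_mul]
    have hIoo : ∫ θ in Set.Ioo (-π) π, g (circleMap 0 r θ)
        = ∫ θ in (-π)..π, g (circleMap 0 r θ) := by
      rw [intervalIntegral.integral_of_le (by linarith [Real.pi_pos]),
        MeasureTheory.integral_Ioc_eq_integral_Ioo]
    have hper : Function.Periodic (fun θ => g (circleMap 0 r θ)) (2*π) :=
      (periodic_circleMap 0 r).comp g
    have hshift := hper.intervalIntegral_add_eq (-π) 0
    rw [show -π + 2*π = π by ring, show (0:ℝ) + 2*π = 2*π by ring] at hshift
    rw [hIoo, hshift, circle_mean g hg 0 r (Set.mem_Ioi.mp hr)]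
    push_cast
    ring
  rw [setIntegral_congr_fun measurableSet_Ioi houter]
  rw [MeasureTheory.integral_mul_const]
  have hcast : (∫ a in Set.Ioi (0:ℝ), ((a * rexp (-a^2) : ℝ) : ℂ))
      = ((∫ a in Set.Ioi (0:ℝ), a * rexp (-a^2) : ℝ) : ℂ) := integral_ofReal
  rw [hcast, radial_gauss]
  push_cast
  ring

theorem gauss_half_integrable : Integrable (fun ξ : ℂ => rexp (-(1/2) * ‖ξ‖^2)) := by
  have h := GaussianFourier.integrable_cexp_neg_mul_sq_norm_add (V := ℂ)
    (b := (1/2 : ℂ)) (by norm_num) 0 0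
  simp only [zero_mul, add_zero] at h
  have h2 := h.norm
  refine h2.congr (Filter.Eventually.of_forall fun ξ => ?_)
  have he : (-(1/2 : ℂ) * (‖ξ‖:ℂ)^2) = ((-(1/2) * ‖ξ‖^2 : ℝ) : ℂ) := by push_cast; ring
  simp only [he, ← Complex.ofReal_exp, Complex.norm_real, Real.norm_eq_abs,
    abs_of_pos (Real.exp_pos _)]

theorem key_real_ineq (A t c : ℝ) (hA : 0 ≤ A) :
    A * rexp (t*c - t^2) ≤ 1/2 * (A^2 * rexp (-t^2))
      + 1/2 * (rexp (2*c^2) * rexp (-(1/2) * t^2)) := by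
  have e1 : rexp (t*c - t^2) = rexp (-(1/2)*t^2) * rexp (t*c - (1/2)*t^2) := by
    rw [← Real.exp_add]; ring_nf
  have am : A * (rexp (-(1/2)*t^2) * rexp (t*c - (1/2)*t^2))
      ≤ 1/2 * ((A * rexp (-(1/2)*t^2))^2 + (rexp (t*c - (1/2)*t^2))^2) := by
    nlinarith [sq_nonneg (A * rexp (-(1/2)*t^2) - rexp (t*c - (1/2)*t^2))]
  have sq1 : (A * rexp (-(1/2)*t^2))^2 = A^2 * rexp (-t^2) := by
    rw [mul_pow, sq (rexp _), ← Real.exp_add]; ring_nf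
  have sq2 : (rexp (t*c - (1/2)*t^2))^2 ≤ rexp (2*c^2) * rexp (-(1/2)*t^2) := by
    rw [sq, ← Real.exp_add, ← Real.exp_add]
    exact Real.exp_le_exp.mpr (by nlinarith [sq_nonneg (t - 2*c)])
  calc A * rexp (t*c - t^2)
      = A * (rexp (-(1/2)*t^2) * rexp (t*c - (1/2)*t^2)) := by rw [e1]
    _ ≤ 1/2 * ((A * rexp (-(1/2)*t^2))^2 + (rexp (t*c - (1/2)*t^2))^2) := am
    _ = 1/2 * (A^2 * rexp (-t^2)) + 1/2 * (rexp (t*c - (1/2)*t^2))^2 := by rw [sq1]; ring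
    _ ≤ 1/2 * (A^2 * rexp (-t^2)) + 1/2 * (rexp (2*c^2) * rexp (-(1/2) * t^2)) := by
        linarith [sq2]

theorem integrand_integrable (f : ℂ → ℂ) (hf : Differentiable ℂ f)
    (hint : Integrable (fun ξ : ℂ => ‖f ξ‖ ^ 2 * rexp (-‖ξ‖ ^ 2))) (z : ℂ) :
    Integrable (fun ξ : ℂ => f ξ * cexp ((starRingEnd ℂ) ξ * z) * (rexp (-‖ξ‖ ^ 2) : ℂ)) := by
  have hD : Integrable (fun ξ : ℂ => 1/2 * (‖f ξ‖^2 * rexp (-‖ξ‖^2))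
      + 1/2 * (rexp (2*‖z‖^2) * rexp (-(1/2) * ‖ξ‖^2))) :=
    (hint.const_mul _).add ((gauss_half_integrable.const_mul _).const_mul _)
  refine hD.mono' ?_ (Filter.Eventually.of_forall fun ξ => ?_)
  · exact ((hf.continuous.mul (Complex.continuous_exp.comp
      (Complex.continuous_conj.mul continuous_const))).mul
      (Complex.continuous_ofReal.comp (Real.continuous_exp.comp
        ((continuous_norm.pow 2).neg)))).aestronglyMeasurable
  · have hnorm : ‖f ξ * cexp ((starRingEnd ℂ) ξ * z) * ((rexp (-‖ξ‖ ^ 2) : ℝ) : ℂ)‖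
        = ‖f ξ‖ * rexp (((starRingEnd ℂ) ξ * z).re) * rexp (-‖ξ‖^2) := by
      simp only [norm_mul, Complex.norm_exp, Complex.norm_real, Real.norm_eq_abs,
        abs_of_pos (Real.exp_pos _)]
    rw [hnorm]
    have hre : ((starRingEnd ℂ) ξ * z).re ≤ ‖ξ‖ * ‖z‖ := by
      calc ((starRingEnd ℂ) ξ * z).re ≤ ‖(starRingEnd ℂ) ξ * z‖ :=
            Complex.re_le_norm _
        _ = ‖ξ‖ * ‖z‖ := by
            rw [norm_mul, Complex.norm_conj]
    have h1 : ‖f ξ‖ * rexp (((starRingEnd ℂ) ξ * z).re) * rexp (-‖ξ‖^2)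
        ≤ ‖f ξ‖ * rexp (‖ξ‖ * ‖z‖ - ‖ξ‖^2) := by
      rw [mul_assoc, ← Real.exp_add]
      exact mul_le_mul_of_nonneg_left (Real.exp_le_exp.mpr (by linarith)) (norm_nonneg _)
    have h2 := key_real_ineq ‖f ξ‖ ‖ξ‖ ‖z‖ (norm_nonneg _)
    have : ‖f ξ‖ * rexp (((starRingEnd ℂ) ξ * z).re) * rexp (-‖ξ‖ ^ 2) ≤
        1/2 * (‖f ξ‖^2 * rexp (-‖ξ‖^2)) + 1/2 * (rexp (2*‖z‖^2) * rexp (-(1/2) * ‖ξ‖^2)) := by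
      linarith
    exact this

/-- Coherent state reproducing formula on the Bargmann space `B₁`:
`f(z) = π⁻¹ ∫ f(ξ) e^{ξ̄ z} e^{-|ξ|²} dξ`. -/
theorem coherent_state_representation (f : ℂ → ℂ) (hf : Differentiable ℂ f)
    (hint : Integrable (fun z : ℂ => ‖f z‖ ^ 2 * Real.exp (-‖z‖ ^ 2))) (z : ℂ) :
    f z = (Real.pi : ℂ)⁻¹ *
      ∫ ξ : ℂ, f ξ * Complex.exp ((starRingEnd ℂ) ξ * z) * (Real.exp (-‖ξ‖ ^ 2) : ℂ) := by
  have hInt := integrand_integrable f hf hint z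
  set g : ℂ → ℂ := fun w => f (z + w) * cexp (-((starRingEnd ℂ) z) * w) with hgdef
  have hgdiff : Differentiable ℂ g :=
    (hf.comp ((differentiable_const _).add differentiable_id)).mul
      (differentiable_id.const_mul (-((starRingEnd ℂ) z))).cexp
  have hcast : ∀ w : ℂ, ((rexp (-‖w‖ ^ 2) : ℝ) : ℂ) = cexp (-(w * (starRingEnd ℂ) w)) := by
    intro w
    rw [Complex.ofReal_exp]
    congr 1
    rw [Complex.mul_conj]
    push_cast [Complex.normSq_eq_norm_sq]
    simp
  have hptw : ∀ ξ : ℂ, f ξ * cexp ((starRingEnd ℂ) ξ * z) * ((rexp (-‖ξ‖ ^ 2) : ℝ) : ℂ)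
      = g (ξ - z) * ((rexp (-‖ξ - z‖ ^ 2) : ℝ) : ℂ) := by
    intro ξ
    simp only [hgdef]
    rw [show z + (ξ - z) = ξ by ring]
    rw [hcast, hcast, mul_assoc, mul_assoc, ← Complex.exp_add, ← Complex.exp_add]
    congr 2
    rw [map_sub]
    ring
  have hIntEq : (fun ξ : ℂ => f ξ * cexp ((starRingEnd ℂ) ξ * z) * ((rexp (-‖ξ‖ ^ 2) : ℝ) : ℂ))
      = fun ξ : ℂ => g (ξ - z) * ((rexp (-‖ξ - z‖ ^ 2) : ℝ) : ℂ) := funext hptw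
  have hgi : Integrable (fun w : ℂ => g w * ((rexp (-‖w‖ ^ 2) : ℝ) : ℂ)) := by
    rw [hIntEq] at hInt
    have h2 := hInt.comp_sub_right (-z)
    refine h2.congr (Filter.Eventually.of_forall fun w => ?_)
    simp
  rw [hIntEq]
  rw [integral_sub_right_eq_self (fun w : ℂ => g w * ((rexp (-‖w‖ ^ 2) : ℝ) : ℂ)) z]
  rw [gaussian_mean g hgdiff hgi]
  have hg0 : g 0 = f z := by simp [hgdef]
  rw [hg0, ← mul_assoc, inv_mul_cancel₀ (Complex.ofReal_ne_zero.mpr Real.pi_ne_zero), one_mul]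
end

section
/- Let N ≥ 2, ω > 0, a > 0 and κ = a/(Nω). The LLL ground state energy E^LLL_N(ω,a) := inf spec(ω L_N + 4πa Δ_N) on B_N satisfies E^LLL_N(ω,a) ≤ aN · min{1/κ, √(2/π) N}. -/
open MeasureTheory

noncomputable section

def BNinner (N : ℕ) (F G : (Fin N → ℂ) → ℂ) : ℂ :=
  ∫ v : Fin N → ℂ, (starRingEnd ℂ) (F v) * G v * (Real.exp (-∑ j, ‖v j‖ ^ 2) : ℂ)

def Lop (N : ℕ) (F : (Fin N → ℂ) → ℂ) : (Fin N → ℂ) → ℂ := fun z =>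
  ∑ j, z j * fderiv ℂ F z (Pi.single j 1)

def deltaij (N : ℕ) (i j : Fin N) (F : (Fin N → ℂ) → ℂ) : (Fin N → ℂ) → ℂ := fun z =>
  (((2 * Real.pi) ^ ((3 : ℝ) / 2))⁻¹ : ℝ) *
    F (Function.update (Function.update z i ((z i + z j) / 2)) j ((z i + z j) / 2))

def DeltaOp (N : ℕ) (F : (Fin N → ℂ) → ℂ) : (Fin N → ℂ) → ℂ := fun z =>
  ∑ p ∈ Finset.univ.filter (fun p : Fin N × Fin N => p.1 < p.2), deltaij N p.1 p.2 F z

def MemBN (N : ℕ) (F : (Fin N → ℂ) → ℂ) : Prop :=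
  Differentiable ℂ F ∧ (∀ σ : Equiv.Perm (Fin N), ∀ v : Fin N → ℂ, F (v ∘ σ) = F v) ∧
    Integrable (fun v : Fin N → ℂ => ‖F v‖ ^ 2 * Real.exp (-∑ j, ‖v j‖ ^ 2))

/-- The LLL ground state energy `E^LLL_N(ω,a) = inf spec (ω L_N + 4πa Δ_N)` on `B_N`,
defined as the infimum of Rayleigh quotients. -/
def ELLL (N : ℕ) (ω a : ℝ) : ℝ :=
  sInf {r : ℝ | ∃ F : (Fin N → ℂ) → ℂ, MemBN N F ∧ 0 < (BNinner N F F).re ∧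
    r = (ω * (BNinner N F (Lop N F)).re + 4 * Real.pi * a * (BNinner N F (DeltaOp N F)).re) /
        (BNinner N F F).re}

/-! ### Auxiliary lemmas -/

lemma aux_pow_le_factorial_mul_exp (d : ℕ) {x : ℝ} (hx : 0 ≤ x) :
    x ^ d ≤ d.factorial * Real.exp x := by
  have h1 : x ^ d / d.factorial ≤ Real.exp x := by
    refine le_trans ?_ (Real.sum_le_exp_of_nonneg hx (d + 1))
    exact Finset.single_le_sum (f := fun i => x ^ i / i.factorial)
      (fun i _ => by positivity) (Finset.self_mem_range_succ d)
  have hfac : (0 : ℝ) < d.factorial := by positivity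
  calc x ^ d = d.factorial * (x ^ d / d.factorial) := by field_simp
  _ ≤ d.factorial * Real.exp x := by
      exact mul_le_mul_of_nonneg_left h1 hfac.le

lemma aux_gauss_integrable (b : ℝ) (hb : 0 < b) :
    Integrable (fun z : ℂ => Real.exp (-b * ‖z‖ ^ 2)) := by
  have h := GaussianFourier.integrable_cexp_neg_mul_sq_norm_add (V := ℂ) (b := (b : ℂ))
    (by simpa using hb) 0 0
  simp only [zero_mul, add_zero] at h
  have h2 := h.norm
  apply h2.congr
  filter_upwards with z
  rw [Complex.norm_exp,
    show (-(b : ℂ) * (‖z‖ : ℂ) ^ 2) = ((-b * ‖z‖ ^ 2 : ℝ) : ℂ) by push_cast; ring,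
    Complex.ofReal_re]

lemma aux_gauss_pi_integrable (N : ℕ) (b : ℝ) (hb : 0 < b) :
    Integrable (fun v : Fin N → ℂ => Real.exp (-b * ∑ j, ‖v j‖ ^ 2)) := by
  have : ∀ v : Fin N → ℂ,
      Real.exp (-b * ∑ j, ‖v j‖ ^ 2) = ∏ j, Real.exp (-b * ‖v j‖ ^ 2) := by
    intro v
    rw [← Real.exp_sum, Finset.mul_sum]
  simp only [this]
  exact Integrable.fintype_prod (fun _ => aux_gauss_integrable b hb)

lemma aux_vol_pos {N : ℕ} {U : Set (Fin N → ℂ)} (hU : IsOpen U) (hne : U.Nonempty) :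
    0 < (volume : Measure (Fin N → ℂ)) U :=
  hU.measure_pos _ hne


lemma aux_one (N : ℕ) (ω a : ℝ) :
    ∃ F, MemBN N F ∧ 0 < (BNinner N F F).re ∧
      (4 * Real.pi * a *
        (((Finset.univ.filter (fun p : Fin N × Fin N => p.1 < p.2)).card : ℝ) *
          ((2 * Real.pi) ^ ((3 : ℝ) / 2))⁻¹))
      = (ω * (BNinner N F (Lop N F)).re +
          4 * Real.pi * a * (BNinner N F (DeltaOp N F)).re) /
        (BNinner N F F).re := by
  set c' : ℝ := ((2 * Real.pi) ^ ((3 : ℝ) / 2))⁻¹ with hc'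
  set M : ℕ := (Finset.univ.filter (fun p : Fin N × Fin N => p.1 < p.2)).card with hM
  set I0 : ℝ := ∫ v : Fin N → ℂ, Real.exp (-∑ j, ‖v j‖ ^ 2) with hI0
  have hint : Integrable (fun v : Fin N → ℂ => Real.exp (-∑ j, ‖v j‖ ^ 2)) := by
    have := aux_gauss_pi_integrable N 1 one_pos
    simpa using this
  have hI0pos : 0 < I0 := by
    rw [hI0, integral_pos_iff_support_of_nonneg (fun v => (Real.exp_pos _).le) hint]
    have hs : Function.support (fun v : Fin N → ℂ => Real.exp (-∑ j, ‖v j‖ ^ 2)) = Set.univ := by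
      ext v; simp [Function.mem_support, (Real.exp_pos _).ne']
    rw [hs]
    exact aux_vol_pos isOpen_univ ⟨fun _ => 0, trivial⟩
  have hBN11 : BNinner N (fun _ => (1:ℂ)) (fun _ => (1:ℂ)) = (I0 : ℂ) := by
    unfold BNinner
    simp only [map_one, one_mul]
    exact integral_ofReal
  have hL : Lop N (fun _ => (1:ℂ)) = fun _ => 0 := by
    funext z; unfold Lop; simp
  have hBNL : BNinner N (fun _ => (1:ℂ)) (Lop N (fun _ => (1:ℂ))) = 0 := by
    rw [hL]; unfold BNinner; simp
  have hD : DeltaOp N (fun _ => (1:ℂ)) = fun _ => (M : ℂ) * (c' : ℂ) := by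
    funext z; unfold DeltaOp deltaij
    rw [Finset.sum_const, nsmul_eq_mul, mul_one]
  have hBND : BNinner N (fun _ => (1:ℂ)) (DeltaOp N (fun _ => (1:ℂ)))
      = ((M * c' * I0 : ℝ) : ℂ) := by
    rw [hD]; unfold BNinner
    simp only [map_one, one_mul]
    have hIo : (∫ v : Fin N → ℂ, ((Real.exp (-∑ j, ‖v j‖ ^ 2) : ℝ) : ℂ)) = ((I0 : ℝ) : ℂ) :=
      integral_ofReal
    rw [integral_const_mul, hIo]
    push_cast
    ring
  refine ⟨fun _ => (1:ℂ), ⟨differentiable_const 1, fun σ v => rfl, by simpa using hint⟩, ?_, ?_⟩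
  · rw [hBN11, Complex.ofReal_re]; exact hI0pos
  · rw [hBN11, hBNL, hBND, Complex.ofReal_re, Complex.ofReal_re, Complex.zero_re]
    field_simp
    ring

lemma aux_laughlin (N : ℕ) (ω a : ℝ) :
    ∃ F, MemBN N F ∧ 0 < (BNinner N F F).re ∧
      ω * (((Finset.univ : Finset (Fin N)).offDiag.card : ℝ))
      = (ω * (BNinner N F (Lop N F)).re + 4 * Real.pi * a * (BNinner N F (DeltaOp N F)).re) /
        (BNinner N F F).re := by
  classical
  set d : ℕ := (Finset.univ : Finset (Fin N)).offDiag.card with hd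
  set G : (Fin N → ℂ) → ℂ :=
    fun z => ∏ p ∈ (Finset.univ : Finset (Fin N)).offDiag, (z p.1 - z p.2) with hG
  have hfact : ∀ p : Fin N × Fin N, Differentiable ℂ (fun z : Fin N → ℂ => z p.1 - z p.2) :=
    fun p => ((ContinuousLinearMap.proj p.1 : (Fin N → ℂ) →L[ℂ] ℂ).differentiable).sub
      ((ContinuousLinearMap.proj p.2 : (Fin N → ℂ) →L[ℂ] ℂ).differentiable)
  have hGdiff : Differentiable ℂ G := by
    rw [hG]
    intro x
    exact (HasFDerivAt.finset_prod (fun p _ => ((hfact p) x).hasFDerivAt)).differentiableAt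
  have hGsym : ∀ σ : Equiv.Perm (Fin N), ∀ v : Fin N → ℂ, G (v ∘ σ) = G v := by
    intro σ v
    simp only [hG]
    refine Finset.prod_nbij' (fun p => (σ p.1, σ p.2)) (fun p => (σ⁻¹ p.1, σ⁻¹ p.2)) ?_ ?_ ?_ ?_ ?_
    · intro p hp
      rcases Finset.mem_offDiag.mp hp with ⟨_, _, hne⟩
      exact Finset.mem_offDiag.mpr
        ⟨Finset.mem_univ _, Finset.mem_univ _, fun h => hne (σ.injective h)⟩
    · intro p hp
      rcases Finset.mem_offDiag.mp hp with ⟨_, _, hne⟩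
      exact Finset.mem_offDiag.mpr
        ⟨Finset.mem_univ _, Finset.mem_univ _, fun h => hne ((Equiv.injective _) h)⟩
    · intro p _; simp
    · intro p _; simp
    · intro p _; rfl
  have hSnn : ∀ v : Fin N → ℂ, 0 ≤ ∑ j, ‖v j‖ ^ 2 :=
    fun v => Finset.sum_nonneg fun j _ => sq_nonneg _
  have hbound : ∀ v : Fin N → ℂ, ‖G v‖ ^ 2 * Real.exp (-∑ j, ‖v j‖ ^ 2)
      ≤ (4 ^ d * d.factorial : ℝ) * Real.exp (-(1/2) * ∑ j, ‖v j‖ ^ 2) := by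
    intro v
    set S := ∑ j, ‖v j‖ ^ 2 with hS
    have hS0 : 0 ≤ S := hSnn v
    have h1 : ‖G v‖ ^ 2 ≤ (2 * S) ^ d := by
      have hGv : ‖G v‖ ^ 2
          = ∏ p ∈ (Finset.univ : Finset (Fin N)).offDiag, ‖v p.1 - v p.2‖ ^ 2 := by
        simp only [hG]
        rw [norm_prod, ← Finset.prod_pow]
      rw [hGv, hd]
      rw [← Finset.prod_const (b := 2 * S)]
      apply Finset.prod_le_prod (fun p _ => sq_nonneg _)
      intro p hp
      have hne : p.1 ≠ p.2 := (Finset.mem_offDiag.mp hp).2.2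
      have hpair : ‖v p.1‖ ^ 2 + ‖v p.2‖ ^ 2 ≤ S := by
        have h := Finset.sum_le_sum_of_subset_of_nonneg
          (Finset.subset_univ ({p.1, p.2} : Finset (Fin N)))
          (fun i _ _ => sq_nonneg ‖v i‖)
        rwa [Finset.sum_pair hne] at h
      have hsub : ‖v p.1 - v p.2‖ ≤ ‖v p.1‖ + ‖v p.2‖ := norm_sub_le _ _
      nlinarith [norm_nonneg (v p.1), norm_nonneg (v p.2), norm_nonneg (v p.1 - v p.2),
        sq_nonneg (‖v p.1‖ - ‖v p.2‖)]
    have h3 : S ^ d ≤ 2 ^ d * (d.factorial * Real.exp (S / 2)) := by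
      have h4 := aux_pow_le_factorial_mul_exp d (x := S / 2) (by linarith)
      calc S ^ d = 2 ^ d * (S / 2) ^ d := by rw [← mul_pow]; ring_nf
      _ ≤ 2 ^ d * (d.factorial * Real.exp (S / 2)) :=
          mul_le_mul_of_nonneg_left h4 (by positivity)
    calc ‖G v‖ ^ 2 * Real.exp (-S)
        ≤ (2 * S) ^ d * Real.exp (-S) :=
          mul_le_mul_of_nonneg_right h1 (Real.exp_pos _).le
    _ = 2 ^ d * S ^ d * Real.exp (-S) := by rw [mul_pow]
    _ ≤ 2 ^ d * (2 ^ d * (d.factorial * Real.exp (S / 2))) * Real.exp (-S) := by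
        apply mul_le_mul_of_nonneg_right _ (Real.exp_pos _).le
        exact mul_le_mul_of_nonneg_left h3 (by positivity)
    _ = 4 ^ d * d.factorial * (Real.exp (S / 2) * Real.exp (-S)) := by
        rw [show (4:ℝ) ^ d = 2 ^ d * 2 ^ d by rw [← mul_pow]; norm_num]
        ring
    _ = 4 ^ d * d.factorial * Real.exp (-(1/2) * S) := by
        rw [← Real.exp_add]
        congr 1
        ring
  have hcont : Continuous fun v : Fin N → ℂ => ‖G v‖ ^ 2 * Real.exp (-∑ j, ‖v j‖ ^ 2) := by
    apply Continuous.mul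
    · exact (hGdiff.continuous.norm).pow 2
    · exact Real.continuous_exp.comp
        (Continuous.neg (continuous_finset_sum _ fun j _ => ((continuous_apply j).norm.pow 2)))
  have hintG : Integrable (fun v : Fin N → ℂ => ‖G v‖ ^ 2 * Real.exp (-∑ j, ‖v j‖ ^ 2)) := by
    have hdom := (aux_gauss_pi_integrable N (1/2) (by norm_num)).const_mul
      (4 ^ d * d.factorial : ℝ)
    refine hdom.mono' hcont.aestronglyMeasurable ?_
    filter_upwards with v
    rw [Real.norm_eq_abs, abs_of_nonneg (by positivity)]
    exact hbound v
  set IG : ℝ := ∫ v : Fin N → ℂ, ‖G v‖ ^ 2 * Real.exp (-∑ j, ‖v j‖ ^ 2) with hIGdef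
  have hIo' : (∫ v : Fin N → ℂ, ((‖G v‖ ^ 2 * Real.exp (-∑ j, ‖v j‖ ^ 2) : ℝ) : ℂ))
      = ((IG : ℝ) : ℂ) := integral_ofReal
  have hBGG : BNinner N G G = ((IG : ℝ) : ℂ) := by
    unfold BNinner
    have hpt : ∀ v : Fin N → ℂ,
        (starRingEnd ℂ) (G v) * G v * (Real.exp (-∑ j, ‖v j‖ ^ 2) : ℂ)
        = ((‖G v‖ ^ 2 * Real.exp (-∑ j, ‖v j‖ ^ 2) : ℝ) : ℂ) := by
      intro v
      rw [Complex.conj_mul']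
      push_cast
      ring
    simp only [hpt]
    exact hIo'
  have hIGpos : 0 < IG := by
    rw [hIGdef, integral_pos_iff_support_of_nonneg
      (fun v => by positivity) hintG]
    have hUopen : IsOpen {v : Fin N → ℂ | G v ≠ 0} :=
      isOpen_compl_singleton.preimage hGdiff.continuous
    have hv0 : G (fun j : Fin N => (j.val : ℂ)) ≠ 0 := by
      simp only [hG]
      rw [Finset.prod_ne_zero_iff]
      intro p hp
      have hne : p.1 ≠ p.2 := (Finset.mem_offDiag.mp hp).2.2
      rw [sub_ne_zero]
      intro h
      exact hne (Fin.ext (Nat.cast_injective h))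
    refine lt_of_lt_of_le (aux_vol_pos hUopen ⟨(fun j : Fin N => (j.val : ℂ)), hv0⟩) (measure_mono ?_)
    intro v hv
    simp only [Set.mem_setOf_eq] at hv
    simp only [Function.mem_support]
    have h1 : 0 < ‖G v‖ ^ 2 := pow_pos (norm_pos_iff.mpr hv) 2
    exact (mul_pos h1 (Real.exp_pos _)).ne'
  have hLopG : ∀ z, Lop N G z = (d : ℂ) * G z := by
    intro z
    have hz' : (∑ j, z j • (Pi.single j 1 : Fin N → ℂ)) = z := by
      funext k
      rw [Finset.sum_apply]
      simp [Pi.single_apply]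
    have h1 : Lop N G z = fderiv ℂ G z z := by
      unfold Lop
      set D := fderiv ℂ G z with hD
      calc (∑ j, z j * D (Pi.single j 1))
          = ∑ j, D (z j • (Pi.single j 1 : Fin N → ℂ)) := by
            refine Finset.sum_congr rfl fun j _ => ?_
            rw [ContinuousLinearMap.map_smul, smul_eq_mul]
      _ = D (∑ j, z j • (Pi.single j 1 : Fin N → ℂ)) := (map_sum D _ _).symm
      _ = D z := by rw [hz']
    have hhom : ∀ t : ℂ, G (t • z) = t ^ d * G z := by
      intro t
      simp only [hG]
      calc (∏ p ∈ (Finset.univ : Finset (Fin N)).offDiag, ((t • z) p.1 - (t • z) p.2))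
          = ∏ p ∈ (Finset.univ : Finset (Fin N)).offDiag, (t * (z p.1 - z p.2)) := by
            refine Finset.prod_congr rfl fun p _ => ?_
            simp only [Pi.smul_apply, smul_eq_mul]
            ring
      _ = t ^ d * ∏ p ∈ (Finset.univ : Finset (Fin N)).offDiag, (z p.1 - z p.2) := by
            rw [Finset.prod_mul_distrib, Finset.prod_const, hd]
    have hfun : (fun t : ℂ => G (t • z)) = fun t : ℂ => t ^ d * G z := funext hhom
    have hd1 : HasDerivAt (fun t : ℂ => G (t • z)) (fderiv ℂ G z z) 1 := by
      have hsm : HasDerivAt (fun t : ℂ => t • z) z 1 := by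
        simpa using (hasDerivAt_id (1:ℂ)).smul_const z
      have hF : HasFDerivAt G (fderiv ℂ G z) ((fun t : ℂ => t • z) 1) := by
        simpa using (hGdiff z).hasFDerivAt
      exact hF.comp_hasDerivAt 1 hsm
    have hd2 : HasDerivAt (fun t : ℂ => G (t • z)) ((d : ℂ) * G z) 1 := by
      rw [hfun]
      have := (hasDerivAt_pow d (1:ℂ)).mul_const (G z)
      simpa using this
    rw [h1, hd1.unique hd2]
  have hBGL : BNinner N G (Lop N G) = (((d : ℝ) * IG : ℝ) : ℂ) := by
    unfold BNinner
    have hpt : ∀ v : Fin N → ℂ,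
        (starRingEnd ℂ) (G v) * Lop N G v * (Real.exp (-∑ j, ‖v j‖ ^ 2) : ℂ)
        = (d : ℂ) * ((‖G v‖ ^ 2 * Real.exp (-∑ j, ‖v j‖ ^ 2) : ℝ) : ℂ) := by
      intro v
      rw [hLopG v,
        show (starRingEnd ℂ) (G v) * ((d:ℂ) * G v) * (Real.exp (-∑ j, ‖v j‖ ^ 2) : ℂ)
          = (d:ℂ) * ((starRingEnd ℂ) (G v) * G v * (Real.exp (-∑ j, ‖v j‖ ^ 2) : ℂ)) by ring,
        Complex.conj_mul']
      push_cast
      ring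
    simp only [hpt]
    rw [integral_const_mul, hIo']
    push_cast
    ring
  have hDG : DeltaOp N G = fun _ => 0 := by
    funext z
    unfold DeltaOp
    apply Finset.sum_eq_zero
    intro p hp
    have hne : p.1 ≠ p.2 := ne_of_lt (Finset.mem_filter.mp hp).2
    unfold deltaij
    set m := (z p.1 + z p.2) / 2 with hm
    have hGz : G (Function.update (Function.update z p.1 m) p.2 m) = 0 := by
      simp only [hG]
      apply Finset.prod_eq_zero
        (Finset.mem_offDiag.mpr ⟨Finset.mem_univ p.1, Finset.mem_univ p.2, hne⟩)
      have h2 : Function.update (Function.update z p.1 m) p.2 m p.2 = m :=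
        Function.update_self _ _ _
      have h1 : Function.update (Function.update z p.1 m) p.2 m p.1 = m := by
        rw [Function.update_of_ne hne, Function.update_self]
      rw [h1, h2, sub_self]
    rw [hGz, mul_zero]
  have hBGD : BNinner N G (DeltaOp N G) = 0 := by
    rw [hDG]; unfold BNinner; simp
  refine ⟨G, ⟨hGdiff, hGsym, hintG⟩, ?_, ?_⟩
  · rw [hBGG, Complex.ofReal_re]; exact hIGpos
  · rw [hBGG, hBGL, hBGD, Complex.ofReal_re, Complex.ofReal_re, Complex.zero_re]
    field_simp
    ring

/-- Simple upper bound: `E^LLL_N(ω,a) ≤ aN min{1/κ, √(2/π) N}` with `κ = a/(Nω)`. -/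
theorem ELLL_upper_bound (N : ℕ) (hN : 2 ≤ N) (ω a : ℝ) (hω : 0 < ω) (ha : 0 < a) :
    ELLL N ω a ≤ a * N * min (a / (N * ω))⁻¹ (Real.sqrt (2 / Real.pi) * N) := by
  have hπ : (0 : ℝ) < Real.pi := Real.pi_pos
  have hNR : (0 : ℝ) < N := by
    have : (0 : ℕ) < N := by omega
    exact_mod_cast this
  obtain ⟨F1, hm1, hp1, he1⟩ := aux_laughlin N ω a
  obtain ⟨F2, hm2, hp2, he2⟩ := aux_one N ω a
  unfold ELLL
  set S := {r : ℝ | ∃ F : (Fin N → ℂ) → ℂ, MemBN N F ∧ 0 < (BNinner N F F).re ∧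
    r = (ω * (BNinner N F (Lop N F)).re + 4 * Real.pi * a * (BNinner N F (DeltaOp N F)).re) /
        (BNinner N F F).re} with hS
  set r1 : ℝ := ω * (((Finset.univ : Finset (Fin N)).offDiag.card : ℝ)) with hr1
  set r2 : ℝ := 4 * Real.pi * a *
    ((((Finset.univ.filter (fun p : Fin N × Fin N => p.1 < p.2)).card : ℝ))
      * ((2 * Real.pi) ^ ((3 : ℝ) / 2))⁻¹) with hr2
  have hmem1 : r1 ∈ S := ⟨F1, hm1, hp1, he1⟩
  have hmem2 : r2 ∈ S := ⟨F2, hm2, hp2, he2⟩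
  have hb1 : r1 ≤ a * N * (a / (N * ω))⁻¹ := by
    have hcard : ((Finset.univ : Finset (Fin N)).offDiag.card : ℝ) ≤ (N : ℝ) * N := by
      have h := Finset.card_le_univ ((Finset.univ : Finset (Fin N)).offDiag)
      have h2 : Fintype.card (Fin N × Fin N) = N * N := by simp
      have h3 : (Finset.univ : Finset (Fin N)).offDiag.card ≤ N * N := by rw [← h2]; exact h
      exact_mod_cast h3
    have heq : a * N * (a / (N * ω))⁻¹ = ω * ((N : ℝ) * N) := by
      rw [inv_div]
      field_simp
    rw [hr1, heq]
    exact mul_le_mul_of_nonneg_left hcard hω.le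
  have hkey : 4 * Real.pi * ((2 * Real.pi) ^ ((3 : ℝ) / 2))⁻¹ = Real.sqrt (2 / Real.pi) := by
    have h2π : (0 : ℝ) < 2 * Real.pi := by linarith
    have hsq : Real.sqrt (2 * Real.pi) ≠ 0 := by positivity
    have h1 : (2 * Real.pi) ^ ((3 : ℝ) / 2) = (2 * Real.pi) * Real.sqrt (2 * Real.pi) := by
      rw [show (3 : ℝ) / 2 = 1 + 1 / 2 by norm_num, Real.rpow_add h2π, Real.rpow_one,
        ← Real.sqrt_eq_rpow]
    have h2 : Real.sqrt (2 / Real.pi) = 2 / Real.sqrt (2 * Real.pi) := by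
      rw [show (2 : ℝ) / Real.pi = 4 / (2 * Real.pi) by field_simp; ring,
        Real.sqrt_div (by norm_num : (0:ℝ) ≤ 4),
        show Real.sqrt 4 = 2 by
          rw [show (4 : ℝ) = 2 ^ 2 by norm_num, Real.sqrt_sq (by norm_num : (0:ℝ) ≤ 2)]]
    have hsqsq : Real.sqrt (2 * Real.pi) * Real.sqrt (2 * Real.pi) = 2 * Real.pi :=
      Real.mul_self_sqrt h2π.le
    rw [h1, h2]
    field_simp
    nlinarith [hsqsq]
  have hb2 : r2 ≤ a * N * (Real.sqrt (2 / Real.pi) * N) := by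
    have hMn : (((Finset.univ.filter (fun p : Fin N × Fin N => p.1 < p.2)).card : ℝ))
        ≤ (N : ℝ) * N := by
      have h := Finset.card_le_univ (Finset.univ.filter (fun p : Fin N × Fin N => p.1 < p.2))
      have h2 : Fintype.card (Fin N × Fin N) = N * N := by simp
      have h3 : (Finset.univ.filter (fun p : Fin N × Fin N => p.1 < p.2)).card ≤ N * N := by
        rw [← h2]; exact h
      exact_mod_cast h3
    have hre : r2 = a * (((Finset.univ.filter (fun p : Fin N × Fin N => p.1 < p.2)).card : ℝ))
        * Real.sqrt (2 / Real.pi) := by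
      rw [hr2, ← hkey]; ring
    rw [hre]
    calc a * (((Finset.univ.filter (fun p : Fin N × Fin N => p.1 < p.2)).card : ℝ))
          * Real.sqrt (2 / Real.pi)
        ≤ a * ((N : ℝ) * N) * Real.sqrt (2 / Real.pi) := by
          apply mul_le_mul_of_nonneg_right _ (Real.sqrt_nonneg _)
          exact mul_le_mul_of_nonneg_left hMn ha.le
    _ = a * N * (Real.sqrt (2 / Real.pi) * N) := by ring
  have hle : ∀ r ∈ S, ∀ b : ℝ, r ≤ b → 0 ≤ b → sInf S ≤ b := by
    intro r hr b hrb hb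
    by_cases hbb : BddBelow S
    · exact le_trans (csInf_le hbb hr) hrb
    · rw [Real.sInf_of_not_bddBelow hbb]; exact hb
  rcases le_total ((a / (N * ω))⁻¹) (Real.sqrt (2 / Real.pi) * N) with hmin | hmin
  · rw [min_eq_left hmin]
    exact hle r1 hmem1 _ hb1 (by positivity)
  · rw [min_eq_right hmin]
    exact hle r2 hmem2 _ hb2 (by positivity)

end
end
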